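/- Let I be a countable directed partially ordered set and let (C(i))_{i∈I} be an inverse system of chain complexes of O-modules, with transition chain maps C(j) → C(i) for i ≤ j. Suppose that: (1) for every i ∈ I and every integer m, the homology group H_m(C(i)) is an Artinian O-module; and (2) either every term of every complex C(i) is an Artinian O-module, or for every pair i ≤ j in I the transition map C(j) → C(i) is surjective in each degree. Then for every integer m the natural map H_m(lim_I C(i)) → lim_I H_m(C(i)) is an isomorphism, where lim_I C(i) denotes the termwise inverse limit of the system of complexes. -/

import Mathlib

/-!
STATEMENT 12: Let `p` be a prime, `E` a finite extension of `ℚ_p`, and `O` the ring of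
integers of `E`.  Let `I` be a countable directed partially ordered set and let
`(C(i))_{i∈I}` be an inverse system of chain complexes of `O`-modules, with transition
chain maps `C(j) → C(i)` for `i ≤ j`.  Suppose that:
(1) for every `i ∈ I` and every integer `m`, the homology group `H_m(C(i))` is an Artinian
    `O`-module; and
(2) either every term of every complex `C(i)` is an Artinian `O`-module, or for every pair
    `i ≤ j` in `I` the transition map `C(j) → C(i)` is surjective in each degree.
Then for every integer `m` the natural map `H_m(lim_I C(i)) → lim_I H_m(C(i))` is an
isomorphism, where `lim_I C(i)` is the termwise inverse limit of the system of complexes.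
(We express the isomorphism by saying that the map to the product `∏_i H_m(C(i))` induced
by the projections is injective with image exactly the compatible families, i.e. exactly
the inverse limit of the homology groups.)
-/

open CategoryTheory

section LimComplex

variable {O : Type} [Ring O] {I : Type} [Preorder I]
variable (C : I → ChainComplex (ModuleCat O) ℤ)
variable (T : ∀ ⦃i j : I⦄, i ≤ j → (C j ⟶ C i))

/-- The submodule of compatible families in the product, in degree `n`:
the degree-`n` term of the inverse limit complex. -/
def limX (n : ℤ) : Submodule O (∀ i, ↥((C i).X n)) where
  carrier := {f | ∀ (i j : I) (h : i ≤ j), (T h).f n (f j) = f i}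
  add_mem' := fun {f g} hf hg i j h => by
    simp only [Pi.add_apply, map_add, hf i j h, hg i j h]
  zero_mem' := fun i j h => by simp only [Pi.zero_apply, map_zero]
  smul_mem' := fun r f hf i j h => by
    simp only [Pi.smul_apply, map_smul, hf i j h]

/-- The differential of the product complex, componentwise. -/
def limBigD (n n' : ℤ) : (∀ i, ↥((C i).X n)) →ₗ[O] (∀ i, ↥((C i).X n')) :=
  LinearMap.pi fun i => (((C i).d n n').hom : ↥((C i).X n) →ₗ[O] ↥((C i).X n')).comp
    (LinearMap.proj i)

/-- The termwise inverse limit of an inverse system of chain complexes of `O`-modules. -/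
def limComplex : ChainComplex (ModuleCat O) ℤ where
  X n := ModuleCat.of O (limX C T n)
  d n n' := ModuleCat.ofHom <| LinearMap.codRestrict (limX C T n')
    ((limBigD C n n').comp (limX C T n).subtype)
    (by
      rintro ⟨f, hf⟩
      intro i j h
      have h1 := LinearMap.congr_fun (congrArg ModuleCat.Hom.hom ((T h).comm n n')) (f j)
      have h2 : (T h).f n (f j) = f i := hf i j h
      calc (T h).f n' ((C j).d n n' (f j))
          = (C i).d n n' ((T h).f n (f j)) := h1.symm
        _ = (C i).d n n' (f i) := by rw [h2])
  shape n n' h := by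
    apply ModuleCat.hom_ext
    apply LinearMap.ext; intro f
    apply Subtype.ext; funext i
    show (C i).d n n' (f.1 i) = _
    rw [(C i).shape n n' h]
    rfl
  d_comp_d' n n' n'' _ _ := by
    apply ModuleCat.hom_ext
    apply LinearMap.ext; intro f
    apply Subtype.ext; funext i
    exact LinearMap.congr_fun (congrArg ModuleCat.Hom.hom ((C i).d_comp_d n n' n'')) (f.1 i)

/-- The projection from the inverse limit complex to the `i`-th complex. -/
def limProj (i : I) : limComplex C T ⟶ C i where
  f n := ModuleCat.ofHom
    { toFun := fun f => f.1 i
      map_add' := fun _ _ => rfl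
      map_smul' := fun _ _ => rfl }
  comm' := fun n n' _ => rfl

end LimComplex
namespace Stmt12

/-! ### Set-theoretic Mittag-Leffler lemma along a chain -/

lemma chain_section {V : ℕ → Type*} (g : ∀ {a b : ℕ}, a ≤ b → V b → V a)
    (gcomp : ∀ {a b c : ℕ} (h1 : a ≤ b) (h2 : b ≤ c) (x : V c),
      g h1 (g h2 x) = g (h1.trans h2) x)
    (grefl : ∀ {a : ℕ} (x : V a), g (le_refl a) x = x)
    (S : ∀ n, Set (V n)) (hne : ∀ n, (S n).Nonempty)
    (hmap : ∀ {a b : ℕ} (h : a ≤ b), ∀ x ∈ S b, g h x ∈ S a)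
    (hML : ∀ n, ∃ K, ∃ hK : n ≤ K, ∀ l (hl : K ≤ l),
      g (hK.trans hl) '' S l = g hK '' S K) :
    ∃ y : ∀ n, V n, (∀ n, y n ∈ S n) ∧ ∀ a b (h : a ≤ b), g h (y b) = y a := by
  choose K hK hstab using hML
  set A : ∀ n, Set (V n) := fun n => g (hK n) '' S (K n) with hA
  have hAS : ∀ n, A n ⊆ S n := by
    rintro n x ⟨w, hw, rfl⟩
    exact hmap _ _ hw
  have hAne : ∀ n, (A n).Nonempty := fun n => ((hne (K n)).image _)
  have key : ∀ n, ∀ x ∈ A n, ∃ x' ∈ A (n + 1), g (Nat.le_succ n) x' = x := by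
    intro n x hx
    set L := max (K n) (K (n + 1)) with hL
    have h1 : K n ≤ L := le_max_left _ _
    have h2 : K (n + 1) ≤ L := le_max_right _ _
    have e1 : g ((hK n).trans h1) '' S L = A n := hstab n L h1
    have e2 : g ((hK (n+1)).trans h2) '' S L = A (n + 1) := hstab (n+1) L h2
    rw [← e1] at hx
    obtain ⟨w, hw, rfl⟩ := hx
    refine ⟨g ((hK (n+1)).trans h2) w, ?_, ?_⟩
    · rw [← e2]; exact Set.mem_image_of_mem _ hw
    · rw [gcomp]
  have step : ∀ n (x : {x : V n // x ∈ A n}),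
      {x' : V (n+1) // x' ∈ A (n+1) ∧ g (Nat.le_succ n) x' = x.1} := by
    intro n x
    exact ⟨(key n x.1 x.2).choose, (key n x.1 x.2).choose_spec⟩
  let y : ∀ n, {x : V n // x ∈ A n} := fun n =>
    Nat.rec ⟨(hAne 0).some, (hAne 0).some_mem⟩
      (fun k ih => ⟨(step k ih).1, (step k ih).2.1⟩) n
  have hsucc : ∀ n, g (Nat.le_succ n) (y (n+1)).1 = (y n).1 := by
    intro n
    exact (step n (y n)).2.2
  refine ⟨fun n => (y n).1, fun n => hAS n (y n).2, ?_⟩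
  intro a b h
  induction b, h using Nat.le_induction with
  | base => exact grefl _
  | succ b hab ih =>
      have := gcomp hab (Nat.le_succ b) ((y (b+1)).1)
      rw [← this, hsucc b, ih]

/-- stabilization of an antitone family of submodules of an Artinian module -/
lemma stab_of_artinian {R W : Type*} [Ring R] [AddCommGroup W] [Module R W]
    [IsArtinian R W] (n : ℕ) (N : ℕ → Submodule R W)
    (hanti : ∀ k l, n ≤ k → k ≤ l → N l ≤ N k) :
    ∃ K, n ≤ K ∧ ∀ l, K ≤ l → N l = N K := by
  have hmono : Monotone (fun j => OrderDual.toDual (N (n + j))) := by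
    intro j j' hj
    exact hanti _ _ (Nat.le_add_right n j) (by omega)
  obtain ⟨j0, hj0⟩ := IsArtinian.monotone_stabilizes ⟨_, hmono⟩
  refine ⟨n + j0, Nat.le_add_right n j0, fun l hl => ?_⟩
  have h2 := hj0 (l - n) (by omega)
  simp only [OrderHom.coe_mk] at h2
  have h3 : N (n + j0) = N (n + (l - n)) :=
    congrArg OrderDual.ofDual h2
  have hln : n + (l - n) = l := by omega
  rw [hln] at h3
  exact h3.symm

/-- image of a coset is a coset -/
lemma image_coset {R M₁ M₂ : Type*} [Ring R] [AddCommGroup M₁] [Module R M₁]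
    [AddCommGroup M₂] [Module R M₂] (φ : M₁ →ₗ[R] M₂) (S : Set M₁) (x₀ : M₁)
    (N : Submodule R M₁) (hS : ∀ v, v ∈ S ↔ v - x₀ ∈ N) :
    φ '' S = {w | w - φ x₀ ∈ N.map φ} := by
  ext w
  constructor
  · rintro ⟨v, hv, rfl⟩
    exact ⟨v - x₀, (hS v).mp hv, by rw [map_sub]⟩
  · rintro ⟨u, hu, husub⟩
    refine ⟨x₀ + u, (hS _).mpr (by simpa using hu), ?_⟩
    rw [map_add]
    rw [eq_sub_iff_add_eq] at husub
    rw [← husub]; abel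
lemma coset_eq {R M₂ : Type*} [Ring R] [AddCommGroup M₂] [Module R M₂]
    (N : Submodule R M₂) (a b : M₂) (hab : a - b ∈ N) :
    {w : M₂ | w - a ∈ N} = {w : M₂ | w - b ∈ N} := by
  ext w
  constructor
  · intro hw
    have := N.add_mem hw hab
    simpa [sub_add_sub_cancel] using this
  · intro hw
    have := N.sub_mem hw hab
    have e : w - b - (a - b) = w - a := by abel
    rwa [e] at this

noncomputable section
variable {R : Type} [Ring R]

namespace SC
variable (S : ShortComplex (ModuleCat R))

/-- concrete projection from kernel of g to homology -/
def hπ : LinearMap.ker S.g.hom →ₗ[R] S.homology :=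
  (S.moduleCatHomologyIso.inv.hom : S.moduleCatLeftHomologyData.H →ₗ[R] S.homology).comp
    (S.moduleCatLeftHomologyData.π.hom : _ →ₗ[R] S.moduleCatLeftHomologyData.H)

lemma hπ_apply (z : LinearMap.ker S.g.hom) :
    hπ S z = S.moduleCatHomologyIso.inv (S.moduleCatLeftHomologyData.π z) := rfl

lemma hπ_surjective : Function.Surjective (hπ S) := by
  intro h
  obtain ⟨z, hz⟩ := Submodule.mkQ_surjective _ (S.moduleCatHomologyIso.hom h)
  refine ⟨z, ?_⟩
  rw [hπ_apply, show S.moduleCatLeftHomologyData.π z = S.moduleCatHomologyIso.hom h from hz]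
  exact S.moduleCatHomologyIso.hom_inv_id_apply h

lemma hπ_eq_zero_iff (z : LinearMap.ker S.g.hom) :
    hπ S z = 0 ↔ ∃ x : S.X₁, S.f x = z.1 := by
  have hinj : Function.Injective S.moduleCatHomologyIso.inv :=
    (ConcreteCategory.bijective_of_isIso S.moduleCatHomologyIso.inv).injective
  rw [hπ_apply]
  constructor
  · intro h
    have h2 : S.moduleCatLeftHomologyData.π z = 0 := by
      apply hinj
      rw [h]; exact (map_zero S.moduleCatHomologyIso.inv.hom).symm
    have h3 : z ∈ LinearMap.range S.moduleCatToCycles :=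
      (Submodule.Quotient.mk_eq_zero _).mp h2
    obtain ⟨x, hx⟩ := h3
    exact ⟨x, congrArg Subtype.val hx⟩
  · rintro ⟨x, hx⟩
    have h3 : z ∈ LinearMap.range S.moduleCatToCycles :=
      ⟨x, Subtype.ext hx⟩
    have h2 : S.moduleCatLeftHomologyData.π z = 0 :=
      (Submodule.Quotient.mk_eq_zero _).mpr h3
    rw [h2]
    exact map_zero S.moduleCatHomologyIso.inv.hom

lemma mem_ker_of_map {S₁ S₂ : ShortComplex (ModuleCat R)} (ψ : S₁ ⟶ S₂)
    (z : LinearMap.ker S₁.g.hom) : ψ.τ₂ z.1 ∈ LinearMap.ker S₂.g.hom := by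
  change S₂.g (ψ.τ₂ z.1) = 0
  have h0 : S₂.g (ψ.τ₂ z.1) = ψ.τ₃ (S₁.g z.1) :=
    congrArg (fun (f : S₁.X₂ ⟶ S₂.X₃) => f z.1) ψ.comm₂₃
  rw [h0, show S₁.g z.1 = 0 from z.2, map_zero]

lemma hπ_naturality {S₁ S₂ : ShortComplex (ModuleCat R)} (ψ : S₁ ⟶ S₂)
    (z : LinearMap.ker S₁.g.hom) :
    ShortComplex.homologyMap ψ (hπ S₁ z) = hπ S₂ ⟨ψ.τ₂ z.1, mem_ker_of_map ψ z⟩ := by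
  have hmono : Function.Injective S₂.iCycles := by
    rw [← ModuleCat.mono_iff_injective]; infer_instance
  have e5 : S₁.iCycles (S₁.moduleCatCyclesIso.inv z) = z.1 :=
    congrArg (fun (f : _ ⟶ S₁.X₂) => f z) S₁.moduleCatCyclesIso_inv_iCycles
  have e6 : S₂.iCycles (S₂.moduleCatCyclesIso.inv ⟨ψ.τ₂ z.1, mem_ker_of_map ψ z⟩)
      = ψ.τ₂ z.1 :=
    congrArg (fun (f : _ ⟶ S₂.X₂) => f (⟨ψ.τ₂ z.1, mem_ker_of_map ψ z⟩ :
      LinearMap.ker S₂.g.hom)) S₂.moduleCatCyclesIso_inv_iCycles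
  have e7 : ShortComplex.cyclesMap ψ (S₁.moduleCatCyclesIso.inv z)
      = S₂.moduleCatCyclesIso.inv ⟨ψ.τ₂ z.1, mem_ker_of_map ψ z⟩ := by
    apply hmono
    have e4 : S₂.iCycles (ShortComplex.cyclesMap ψ (S₁.moduleCatCyclesIso.inv z))
        = ψ.τ₂ (S₁.iCycles (S₁.moduleCatCyclesIso.inv z)) :=
      congrArg (fun (f : S₁.cycles ⟶ S₂.X₂) => f (S₁.moduleCatCyclesIso.inv z))
        (ShortComplex.cyclesMap_i ψ)
    rw [e4, e5, e6]
  have e1 : hπ S₁ z = S₁.homologyπ (S₁.moduleCatCyclesIso.inv z) :=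
    (congrArg (fun (f : _ ⟶ S₁.homology) => f z) S₁.moduleCatCyclesIso_inv_π).symm
  have e2 : hπ S₂ ⟨ψ.τ₂ z.1, mem_ker_of_map ψ z⟩
      = S₂.homologyπ (S₂.moduleCatCyclesIso.inv ⟨ψ.τ₂ z.1, mem_ker_of_map ψ z⟩) :=
    (congrArg (fun (f : _ ⟶ S₂.homology) => f (⟨ψ.τ₂ z.1, mem_ker_of_map ψ z⟩ :
      LinearMap.ker S₂.g.hom)) S₂.moduleCatCyclesIso_inv_π).symm
  have e3 : ShortComplex.homologyMap ψ (S₁.homologyπ (S₁.moduleCatCyclesIso.inv z))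
      = S₂.homologyπ (ShortComplex.cyclesMap ψ (S₁.moduleCatCyclesIso.inv z)) :=
    congrArg (fun (f : S₁.cycles ⟶ S₂.homology) => f (S₁.moduleCatCyclesIso.inv z))
      (ShortComplex.homologyπ_naturality ψ)
  rw [e1, e2, e3, e7]

end SC
end

noncomputable section
variable {R : Type} [Ring R]
namespace HC
variable (X : ChainComplex (ModuleCat R) ℤ) (m : ℤ)

lemma prev_int (m : ℤ) : (ComplexShape.down ℤ).prev m = m + 1 :=
  (ComplexShape.down ℤ).prev_eq' (by simp)

lemma next_int (m : ℤ) : (ComplexShape.down ℤ).next m = m - 1 :=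
  (ComplexShape.down ℤ).next_eq' (by simp)

lemma next_prev (m : ℤ) :
    (ComplexShape.down ℤ).next ((ComplexShape.down ℤ).prev m) = m := by
  rw [prev_int, next_int]; omega

/-- cycles at degree m, as a submodule -/
abbrev Cyc : Submodule R (X.X m) := LinearMap.ker ((X.sc m).g.hom)

/-- boundaries at degree m, as a submodule -/
abbrev Bd : Submodule R (X.X m) := LinearMap.range ((X.sc m).f.hom)

/-- projection to homology -/
def Hπ : Cyc X m →ₗ[R] X.homology m := SC.hπ (X.sc m)

lemma Hπ_surjective : Function.Surjective (Hπ X m) := SC.hπ_surjective _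

lemma Hπ_eq_zero_iff (z : Cyc X m) :
    Hπ X m z = 0 ↔ ∃ w : X.X ((ComplexShape.down ℤ).prev m),
      X.d ((ComplexShape.down ℤ).prev m) m w = z.1 :=
  SC.hπ_eq_zero_iff (X.sc m) z

variable {X m}

lemma cyc_map {Y : ChainComplex (ModuleCat R) ℤ} (φ : X ⟶ Y) (z : Cyc X m) :
    φ.f m z.1 ∈ Cyc Y m :=
  SC.mem_ker_of_map ((HomologicalComplex.shortComplexFunctor _ _ m).map φ) z

lemma Hπ_naturality {Y : ChainComplex (ModuleCat R) ℤ} (φ : X ⟶ Y) (z : Cyc X m) :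
    HomologicalComplex.homologyMap φ m (Hπ X m z) = Hπ Y m ⟨φ.f m z.1, cyc_map φ z⟩ :=
  SC.hπ_naturality ((HomologicalComplex.shortComplexFunctor _ _ m).map φ) z

variable (X m)

lemma mem_cyc_iff (x : X.X m) :
    x ∈ Cyc X m ↔ X.d m ((ComplexShape.down ℤ).next m) x = 0 := Iff.rfl

lemma d_mem_cyc (j : ℤ) (w : X.X j) : X.d j m w ∈ Cyc X m := by
  rw [mem_cyc_iff]
  have h0 := congrArg (fun (f : X.X j ⟶ X.X ((ComplexShape.down ℤ).next m)) => f w)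
    (X.d_comp_d j m ((ComplexShape.down ℤ).next m))
  exact h0.trans (LinearMap.zero_apply w)

lemma bd_le_cyc : Bd X m ≤ Cyc X m := by
  rintro x ⟨w, rfl⟩
  exact d_mem_cyc X m _ w

/-- cycles as kernel of an arbitrary differential with matching target -/
lemma cyc_eq_ker (m' : ℤ) (hm' : (ComplexShape.down ℤ).next m = m') :
    Cyc X m = LinearMap.ker (X.d m m').hom := by
  subst hm'; rfl

end HC
end

noncomputable section App
open HC

variable {R : Type} [Ring R] {I : Type} [Preorder I]
variable (C : I → ChainComplex (ModuleCat R) ℤ)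
variable (T : ∀ ⦃i j : I⦄, i ≤ j → (C j ⟶ C i))
lemma tcomp_apply
    (Tcomp : ∀ (i j l : I) (hij : i ≤ j) (hjl : j ≤ l),
      T (hij.trans hjl) = T hjl ≫ T hij) (deg : ℤ) {i j l : I} (hij : i ≤ j) (hjl : j ≤ l)
    (x : (C l).X deg) :
    (T hij).f deg ((T hjl).f deg x) = (T (hij.trans hjl)).f deg x := by
  have e := Tcomp i j l hij hjl
  exact (congrArg (fun (ψ : C l ⟶ C i) => ψ.f deg x) e).symm

lemma trefl_apply (Trefl : ∀ i : I, T (le_refl i) = 𝟙 (C i)) (deg : ℤ) {i : I}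
    (h : i ≤ i) (x : (C i).X deg) : (T h).f deg x = x := by
  have e : T h = 𝟙 (C i) := Trefl i
  exact congrArg (fun (ψ : C i ⟶ C i) => ψ.f deg x) e

/-- map of submodule along a composite transition -/
lemma map_trans
    (Tcomp : ∀ (i j l : I) (hij : i ≤ j) (hjl : j ≤ l),
      T (hij.trans hjl) = T hjl ≫ T hij) (deg : ℤ) {i j l : I} (hij : i ≤ j) (hjl : j ≤ l)
    (Q : Submodule R ((C l).X deg)) :
    Q.map ((T (hij.trans hjl)).f deg).hom = (Q.map ((T hjl).f deg).hom).map ((T hij).f deg).hom := by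
  rw [Tcomp i j l hij hjl, HomologicalComplex.comp_f, ModuleCat.hom_comp,
    Submodule.map_comp]

/-- The master existence lemma. -/
lemma master [IsDirected I (· ≤ ·)] [Countable I] [Nonempty I]
    (Trefl : ∀ i : I, T (le_refl i) = 𝟙 (C i))
    (Tcomp : ∀ (i j l : I) (hij : i ≤ j) (hjl : j ≤ l),
      T (hij.trans hjl) = T hjl ≫ T hij)
    (deg : ℤ) (S : ∀ i, Set ((C i).X deg)) (x₀ : ∀ i, (C i).X deg)
    (hx₀ : ∀ i, x₀ i ∈ S i) (M : ∀ i, Submodule R ((C i).X deg))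
    (hS : ∀ i (v : (C i).X deg), v ∈ S i ↔ v - x₀ i ∈ M i)
    (hmap : ∀ ⦃i j : I⦄ (h : i ≤ j), ∀ x ∈ S j, (T h).f deg x ∈ S i)
    (stab : ∀ (u : ℕ → I) (_ : Monotone u) (n : ℕ), ∃ K, ∃ hK : n ≤ K,
      ∀ l (hl : K ≤ l), ∀ (h1 : u n ≤ u l) (h2 : u n ≤ u K),
        (M (u l)).map ((T h1).f deg).hom = (M (u K)).map ((T h2).f deg).hom) :
    ∃ f : limX C T deg, ∀ i, f.1 i ∈ S i := by
  -- a monotone cofinal sequence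
  letI : Encodable I := Encodable.ofCountable I
  letI : Inhabited I := Classical.inhabited_of_nonempty ‹Nonempty I›
  have hdir : Directed (· ≤ ·) (id : I → I) := fun a b => directed_of (· ≤ ·) a b
  set u : ℕ → I := hdir.sequence id with hu_def
  have hu : Monotone u := hdir.sequence_mono
  have hcof : ∀ i : I, ∃ n, i ≤ u n :=
    fun i => ⟨Encodable.encode i + 1, hdir.le_sequence i⟩
  -- Mittag-Leffler condition along the chain
  have hML : ∀ n, ∃ K, ∃ hK : n ≤ K, ∀ l (hl : K ≤ l),
      (fun {a b : ℕ} (h : a ≤ b) (x : (C (u b)).X deg) => (T (hu h)).f deg x)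
        (hK.trans hl) '' S (u l)
      = (fun {a b : ℕ} (h : a ≤ b) (x : (C (u b)).X deg) => (T (hu h)).f deg x)
        hK '' S (u K) := by
    intro n
    obtain ⟨K, hK, hst⟩ := stab u hu n
    refine ⟨K, hK, fun l hl => ?_⟩
    have e1 : (T (hu (hK.trans hl))).f deg '' S (u l)
        = {w | w - (T (hu (hK.trans hl))).f deg (x₀ (u l))
            ∈ (M (u l)).map ((T (hu (hK.trans hl))).f deg).hom} :=
      image_coset ((T (hu (hK.trans hl))).f deg).hom
        (S (u l)) (x₀ (u l)) (M (u l)) (hS (u l))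
    have e2 : (T (hu hK)).f deg '' S (u K)
        = {w | w - (T (hu hK)).f deg (x₀ (u K))
            ∈ (M (u K)).map ((T (hu hK)).f deg).hom} :=
      image_coset ((T (hu hK)).f deg).hom
        (S (u K)) (x₀ (u K)) (M (u K)) (hS (u K))
    have hPeq : (M (u l)).map ((T (hu (hK.trans hl))).f deg).hom
        = (M (u K)).map ((T (hu hK)).f deg).hom := hst l hl _ _
    have hbase : (T (hu (hK.trans hl))).f deg (x₀ (u l))
        - (T (hu hK)).f deg (x₀ (u K)) ∈ (M (u K)).map ((T (hu hK)).f deg).hom := by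
      have h01 : (T (hu hl)).f deg (x₀ (u l)) ∈ S (u K) := hmap (hu hl) _ (hx₀ (u l))
      have h02 : (T (hu hl)).f deg (x₀ (u l)) - x₀ (u K) ∈ M (u K) := (hS _ _).mp h01
      have h03 : (T (hu hK)).f deg ((T (hu hl)).f deg (x₀ (u l)) - x₀ (u K))
          ∈ (M (u K)).map ((T (hu hK)).f deg).hom := Submodule.mem_map_of_mem h02
      rw [map_sub] at h03
      rwa [tcomp_apply C T Tcomp deg (hu hK) (hu hl) (x₀ (u l))] at h03
    show (T (hu (hK.trans hl))).f deg '' S (u l) = (T (hu hK)).f deg '' S (u K)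
    rw [e1, e2, hPeq]
    exact coset_eq _ _ _ hbase
  -- chain lemma
  obtain ⟨y, hyS, hycomp⟩ := chain_section
    (V := fun n => (C (u n)).X deg)
    (g := fun {a b} h x => (T (hu h)).f deg x)
    (fun h1 h2 x => tcomp_apply C T Tcomp deg (hu h1) (hu h2) x)
    (fun {a} x => trefl_apply C T Trefl deg (hu (le_refl a)) x)
    (fun n => S (u n)) (fun n => ⟨x₀ (u n), hx₀ (u n)⟩)
    (fun {a b} h x hx => hmap (hu h) x hx)
    hML
  -- extend to the full limit
  have wd : ∀ (i : I) (n : ℕ) (h : i ≤ u n) (n' : ℕ) (h' : i ≤ u n'),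
      (T h).f deg (y n) = (T h').f deg (y n') := by
    intro i n h n' h'
    have hb1 : n ≤ max n n' := le_max_left _ _
    have hb2 : n' ≤ max n n' := le_max_right _ _
    rw [← hycomp n (max n n') hb1, ← hycomp n' (max n n') hb2,
      tcomp_apply C T Tcomp deg h (hu hb1), tcomp_apply C T Tcomp deg h' (hu hb2)]
  have hmem : (fun i => (T (hcof i).choose_spec).f deg (y (hcof i).choose))
      ∈ limX C T deg := by
    intro i j hij
    have hj : j ≤ u (hcof j).choose := (hcof j).choose_spec
    rw [tcomp_apply C T Tcomp deg hij hj (y (hcof j).choose)]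
    exact wd i _ (hij.trans hj) _ (hcof i).choose_spec
  refine ⟨⟨_, hmem⟩, fun i => ?_⟩
  exact hmap (hcof i).choose_spec _ (hyS (hcof i).choose)


lemma hmapM_of (deg : ℤ) (S : ∀ i, Set ((C i).X deg)) (x₀ : ∀ i, (C i).X deg)
    (hx₀ : ∀ i, x₀ i ∈ S i) (M : ∀ i, Submodule R ((C i).X deg))
    (hS : ∀ i (v : (C i).X deg), v ∈ S i ↔ v - x₀ i ∈ M i)
    (hmap : ∀ ⦃i j : I⦄ (h : i ≤ j), ∀ x ∈ S j, (T h).f deg x ∈ S i) :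
    ∀ ⦃i j : I⦄ (h : i ≤ j), (M j).map ((T h).f deg).hom ≤ M i := by
  rintro i j h _ ⟨w, hw, rfl⟩
  have h1 : x₀ j + w ∈ S j := (hS j _).mpr (by simpa using hw)
  have h4 := (hS i _).mp (hmap h _ h1)
  have h5 := (hS i _).mp (hmap h _ (hx₀ j))
  have h6 := (M i).sub_mem h4 h5
  have e : (T h).f deg (x₀ j + w) - x₀ i - ((T h).f deg (x₀ j) - x₀ i)
      = (T h).f deg w := by rw [map_add]; abel
  rwa [e] at h6

lemma stab_of_const (deg : ℤ) (M : ∀ i, Submodule R ((C i).X deg))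
    (hconst : ∀ ⦃i j : I⦄ (h : i ≤ j), (M j).map ((T h).f deg).hom = M i)
    (u : ℕ → I) (_ : Monotone u) (n : ℕ) :
    ∃ K, ∃ hK : n ≤ K, ∀ l (hl : K ≤ l), ∀ (h1 : u n ≤ u l) (h2 : u n ≤ u K),
      (M (u l)).map ((T h1).f deg).hom = (M (u K)).map ((T h2).f deg).hom :=
  ⟨n, le_refl n, fun l _ h1 h2 => by rw [hconst h1, hconst h2]⟩

lemma stab_of_artinian_terms
    (Tcomp : ∀ (i j l : I) (hij : i ≤ j) (hjl : j ≤ l),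
      T (hij.trans hjl) = T hjl ≫ T hij) (deg : ℤ)
    (hart : ∀ i : I, IsArtinian R ((C i).X deg))
    (M : ∀ i, Submodule R ((C i).X deg))
    (hmapM : ∀ ⦃i j : I⦄ (h : i ≤ j), (M j).map ((T h).f deg).hom ≤ M i)
    (u : ℕ → I) (hu : Monotone u) (n : ℕ) :
    ∃ K, ∃ hK : n ≤ K, ∀ l (hl : K ≤ l), ∀ (h1 : u n ≤ u l) (h2 : u n ≤ u K),
      (M (u l)).map ((T h1).f deg).hom = (M (u K)).map ((T h2).f deg).hom := by
  haveI := hart (u n)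
  set N : ℕ → Submodule R ((C (u n)).X deg) := fun l =>
    if h : n ≤ l then (M (u l)).map ((T (hu h)).f deg).hom else ⊥ with hN
  have hanti : ∀ k l, n ≤ k → k ≤ l → N l ≤ N k := by
    intro k l hk hl
    rw [hN]
    simp only [dif_pos (hk.trans hl), dif_pos hk]
    have e : (M (u l)).map ((T (hu (hk.trans hl))).f deg).hom
        = ((M (u l)).map ((T (hu hl)).f deg).hom).map ((T (hu hk)).f deg).hom :=
      map_trans C T Tcomp deg (hu hk) (hu hl) (M (u l))
    rw [e]
    exact Submodule.map_mono (hmapM (hu hl))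
  obtain ⟨K, hK, hst⟩ := stab_of_artinian n N hanti
  refine ⟨K, hK, fun l hl h1 h2 => ?_⟩
  have h3 := hst l hl
  rw [hN] at h3
  simp only [dif_pos (hK.trans hl), dif_pos hK] at h3
  exact h3

lemma stab_of_homology
    (Tcomp : ∀ (i j l : I) (hij : i ≤ j) (hjl : j ≤ l),
      T (hij.trans hjl) = T hjl ≫ T hij)
    (deg m : ℤ) (hnext : (ComplexShape.down ℤ).next deg = m)
    (hart : ∀ i : I, IsArtinian R ((C i).homology deg))
    (hsurj : ∀ (i j : I) (h : i ≤ j) (k : ℤ), Function.Surjective ((T h).f k))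
    (u : ℕ → I) (hu : Monotone u) (n : ℕ) :
    ∃ K, ∃ hK : n ≤ K, ∀ l (hl : K ≤ l), ∀ (h1 : u n ≤ u l) (h2 : u n ≤ u K),
      (LinearMap.ker ((C (u l)).d deg m).hom).map ((T h1).f deg).hom
        = (LinearMap.ker ((C (u K)).d deg m).hom).map ((T h2).f deg).hom := by
  haveI := hart (u n)
  set i := u n with hi
  set B : Submodule R ((C i).X deg) := Bd (C i) deg with hB
  -- the images in homology stabilize
  set Q : ℕ → Submodule R ((C i).homology deg) := fun l =>
    if h : n ≤ l then
      LinearMap.range (HomologicalComplex.homologyMap (T (hu h)) deg).hom else ⊥ with hQ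
  have hantiQ : ∀ k l, n ≤ k → k ≤ l → Q l ≤ Q k := by
    intro k l hk hl
    rw [hQ]
    simp only [dif_pos (hk.trans hl), dif_pos hk]
    have eT : T (hu (hk.trans hl)) = T (hu hl) ≫ T (hu hk) :=
      Tcomp _ _ _ (hu hk) (hu hl)
    rw [eT, HomologicalComplex.homologyMap_comp, ModuleCat.hom_comp]
    exact LinearMap.range_comp_le_range _ _
  obtain ⟨K, hK, hQst⟩ := stab_of_artinian n Q hantiQ
  -- an injection of homology into `X deg ⧸ B`
  set e0 : Cyc (C i) deg →ₗ[R] (↥((C i).X deg) ⧸ B) :=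
    B.mkQ.comp (Cyc (C i) deg).subtype with he0
  have hrange_le : LinearMap.range ((C i).sc deg).moduleCatToCycles
      ≤ LinearMap.ker e0 := by
    rintro _ ⟨x, rfl⟩
    exact (Submodule.Quotient.mk_eq_zero B).mpr ⟨x, rfl⟩
  set lft := (LinearMap.range ((C i).sc deg).moduleCatToCycles).liftQ e0 hrange_le
    with hlft
  set ebar : ↥((C i).homology deg) →ₗ[R] (↥((C i).X deg) ⧸ B) :=
    lft.comp (((C i).sc deg).moduleCatHomologyIso.hom.hom :
      ↥((C i).homology deg) →ₗ[R] ((C i).sc deg).moduleCatLeftHomologyData.H) with hebar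
  have hebar_π : ∀ z : Cyc (C i) deg, ebar (Hπ (C i) deg z) = B.mkQ z.1 := by
    intro z
    have e1 : (((C i).sc deg).moduleCatHomologyIso.hom)
        ((((C i).sc deg).moduleCatHomologyIso.inv)
          (((C i).sc deg).moduleCatLeftHomologyData.π z))
        = ((C i).sc deg).moduleCatLeftHomologyData.π z :=
      Iso.inv_hom_id_apply (((C i).sc deg).moduleCatHomologyIso) _
    calc ebar (Hπ (C i) deg z)
        = lft (((C i).sc deg).moduleCatLeftHomologyData.π z) := congrArg lft e1
      _ = B.mkQ z.1 := Submodule.liftQ_apply _ e0 z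
  have hebar_inj : Function.Injective ebar := by
    have h1 : Function.Injective (((C i).sc deg).moduleCatHomologyIso.hom) :=
      (ModuleCat.mono_iff_injective _).mp inferInstance
    have h2 : Function.Injective lft := by
      rw [← LinearMap.ker_eq_bot, hlft]
      apply Submodule.ker_liftQ_eq_bot
      rintro z hz
      have hz' : z.1 ∈ B := (Submodule.Quotient.mk_eq_zero B).mp hz
      obtain ⟨x, hx⟩ := hz'
      exact ⟨x, Subtype.ext hx⟩
    intro a b hab
    exact h1 (h2 hab)
  -- the bridge between cycle images and homology images
  have bridge : ∀ (j : I) (hij : i ≤ j),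
      ((LinearMap.ker ((C j).d deg m).hom).map ((T hij).f deg).hom).map B.mkQ
      = (LinearMap.range (HomologicalComplex.homologyMap (T hij) deg).hom).map ebar := by
    intro j hij
    apply le_antisymm
    · rintro _ ⟨_, ⟨w, hw, rfl⟩, rfl⟩
      have hwc : w ∈ Cyc (C j) deg := by
        rw [cyc_eq_ker (C j) deg m hnext]; exact hw
      refine ⟨HomologicalComplex.homologyMap (T hij) deg (Hπ (C j) deg ⟨w, hwc⟩),
        ⟨_, rfl⟩, ?_⟩
      rw [Hπ_naturality (T hij) ⟨w, hwc⟩, hebar_π]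
    · rintro _ ⟨q, ⟨hh, rfl⟩, rfl⟩
      obtain ⟨z', rfl⟩ := Hπ_surjective (C j) deg hh
      rw [Hπ_naturality (T hij) z', hebar_π]
      refine ⟨(T hij).f deg z'.1, ⟨z'.1, ?_, rfl⟩, rfl⟩
      rw [← cyc_eq_ker (C j) deg m hnext]; exact z'.2
  -- boundaries are contained in all the cycle images, by surjectivity
  have hBle : ∀ (j : I) (hij : i ≤ j),
      B ≤ (LinearMap.ker ((C j).d deg m).hom).map ((T hij).f deg).hom := by
    rintro j hij _ ⟨x, rfl⟩
    obtain ⟨x', hx'⟩ := hsurj i j hij ((ComplexShape.down ℤ).prev deg) x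
    refine ⟨(C j).d ((ComplexShape.down ℤ).prev deg) deg x', ?_, ?_⟩
    · have h0 := congrArg (fun (ψ : (C j).X ((ComplexShape.down ℤ).prev deg) ⟶
        (C j).X m) => ψ x') ((C j).d_comp_d ((ComplexShape.down ℤ).prev deg) deg m)
      exact h0.trans (LinearMap.zero_apply x')
    · have h0 := congrArg (fun (ψ : (C j).X ((ComplexShape.down ℤ).prev deg) ⟶
        (C i).X deg) => ψ x') ((T hij).comm ((ComplexShape.down ℤ).prev deg) deg)
      calc (T hij).f deg ((C j).d ((ComplexShape.down ℤ).prev deg) deg x')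
          = (C i).d ((ComplexShape.down ℤ).prev deg) deg
            ((T hij).f ((ComplexShape.down ℤ).prev deg) x') := h0.symm
        _ = (C i).d ((ComplexShape.down ℤ).prev deg) deg x := by rw [hx']
  -- conclude by lifting the stabilization through the quotient
  refine ⟨K, hK, fun l hl h1 h2 => ?_⟩
  have hQeq : Q l = Q K := hQst l hl
  rw [hQ] at hQeq
  simp only [dif_pos (hK.trans hl), dif_pos hK] at hQeq
  have hmkQeq : ((LinearMap.ker ((C (u l)).d deg m).hom).map ((T h1).f deg).hom).map B.mkQ
      = ((LinearMap.ker ((C (u K)).d deg m).hom).map ((T h2).f deg).hom).map B.mkQ := by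
    rw [bridge (u l) h1, bridge (u K) h2]
    exact congrArg (Submodule.map ebar) hQeq
  have unq : ∀ (j : I) (hij : i ≤ j),
      Submodule.comap B.mkQ (((LinearMap.ker ((C j).d deg m).hom).map
        ((T hij).f deg).hom).map B.mkQ)
      = (LinearMap.ker ((C j).d deg m).hom).map ((T hij).f deg).hom := by
    intro j hij
    rw [Submodule.comap_map_eq, Submodule.ker_mkQ]
    exact sup_eq_left.mpr (hBle j hij)
  rw [← unq (u l) h1, ← unq (u K) h2, hmkQeq]

end App

end Stmt12


theorem stmt_12
    (p : ℕ) [Fact p.Prime] (E : Type) [Field E] [Algebra ℚ_[p] E]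
    [FiniteDimensional ℚ_[p] E] [Algebra ℤ_[p] E] [IsScalarTower ℤ_[p] ℚ_[p] E]
    (I : Type) [PartialOrder I] [IsDirected I (· ≤ ·)] [Countable I]
    (C : I → ChainComplex (ModuleCat ↥(integralClosure ℤ_[p] E)) ℤ)
    (T : ∀ ⦃i j : I⦄, i ≤ j → (C j ⟶ C i))
    (Trefl : ∀ i : I, T (le_refl i) = 𝟙 (C i))
    (Tcomp : ∀ (i j l : I) (hij : i ≤ j) (hjl : j ≤ l),
      T (hij.trans hjl) = T hjl ≫ T hij)
    (hart : ∀ (i : I) (m : ℤ),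
      IsArtinian ↥(integralClosure ℤ_[p] E) ↥((C i).homology m))
    (h2 : (∀ (i : I) (n : ℤ), IsArtinian ↥(integralClosure ℤ_[p] E) ↥((C i).X n)) ∨
      (∀ (i j : I) (h : i ≤ j) (n : ℤ), Function.Surjective ((T h).f n))) :
    ∀ m : ℤ,
      Function.Injective
        (fun (h : ↥((limComplex C T).homology m)) (i : I) =>
          HomologicalComplex.homologyMap (limProj C T i) m h) ∧
      Set.range
        (fun (h : ↥((limComplex C T).homology m)) (i : I) =>
          HomologicalComplex.homologyMap (limProj C T i) m h)
        = {g : ∀ i : I, ↥((C i).homology m) |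
            ∀ (i j : I) (hij : i ≤ j),
              HomologicalComplex.homologyMap (T hij) m (g j) = g i} := by
  classical
  intro m
  set R := ↥(integralClosure ℤ_[p] E) with hR
  -- the easy functoriality fact
  have hproj : ∀ (i j : I) (hij : i ≤ j)
      (h : ↥((limComplex C T).homology m)),
      HomologicalComplex.homologyMap (T hij) m
        (HomologicalComplex.homologyMap (limProj C T j) m h)
      = HomologicalComplex.homologyMap (limProj C T i) m h := by
    intro i j hij h
    have hc : limProj C T j ≫ T hij = limProj C T i := by
      apply HomologicalComplex.hom_ext
      intro n
      apply ModuleCat.hom_ext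
      apply LinearMap.ext
      intro x
      exact x.2 i j hij
    have e1 := congrArg
      (fun (ψ : (limComplex C T).homology m ⟶ (C i).homology m) => ψ h)
      (HomologicalComplex.homologyMap_comp (limProj C T j) (T hij) m).symm
    have e2 := congrArg
      (fun (φ : limComplex C T ⟶ C i) =>
        HomologicalComplex.homologyMap φ m h) hc
    exact e1.trans e2
  rcases isEmpty_or_nonempty I with hI | hI
  · -- empty index set : everything is trivial
    haveI : Subsingleton (∀ i, ↥((C i).X m)) :=
      ⟨fun a b => funext fun i => isEmptyElim i⟩
    haveI hsub1 : Subsingleton ↑((limComplex C T).X m) :=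
      ⟨fun a b => Subtype.ext (Subsingleton.elim _ _)⟩
    haveI hsub2 : Subsingleton ↥(Stmt12.HC.Cyc (limComplex C T) m) :=
      ⟨fun a b => Subtype.ext (Subsingleton.elim _ _)⟩
    haveI hsub3 : Subsingleton ↥((limComplex C T).homology m) := by
      constructor
      intro a b
      obtain ⟨za, rfl⟩ := Stmt12.HC.Hπ_surjective (limComplex C T) m a
      obtain ⟨zb, rfl⟩ := Stmt12.HC.Hπ_surjective (limComplex C T) m b
      rw [Subsingleton.elim za zb]
    constructor
    · intro a b _
      exact Subsingleton.elim a b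
    · ext g
      simp only [Set.mem_range, Set.mem_setOf_eq]
      constructor
      · intro _ i
        exact isEmptyElim i
      · intro _
        exact ⟨0, funext fun i => isEmptyElim i⟩
  · constructor
    · -- injectivity
      intro a b hab
      have hz0 : ∀ i, HomologicalComplex.homologyMap (limProj C T i) m (a - b)
          = 0 := by
        intro i
        have h1 : HomologicalComplex.homologyMap (limProj C T i) m a
            = HomologicalComplex.homologyMap (limProj C T i) m b := congrFun hab i
        rw [map_sub, h1, sub_self]
      obtain ⟨z, hzeq⟩ := Stmt12.HC.Hπ_surjective (limComplex C T) m (a - b)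
      rw [← sub_eq_zero, ← hzeq]
      set deg := (ComplexShape.down ℤ).prev m with hdeg
      have hcomp : ∀ i : I, ∃ w : (C i).X deg, (C i).d deg m w = z.1.1 i := by
        intro i
        have hnat := Stmt12.HC.Hπ_naturality (limProj C T i) z
        rw [hzeq] at hnat
        have h0 := hnat.symm.trans (hz0 i)
        rw [Stmt12.HC.Hπ_eq_zero_iff] at h0
        exact h0
      set S : ∀ i : I, Set ((C i).X deg) :=
        fun i => {w | (C i).d deg m w = z.1.1 i} with hs_def
      set x₀ : ∀ i : I, (C i).X deg := fun i => (hcomp i).choose with hx0_def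
      have hx₀ : ∀ i, x₀ i ∈ S i := fun i => (hcomp i).choose_spec
      set M : ∀ i : I, Submodule R ((C i).X deg) :=
        fun i => LinearMap.ker ((C i).d deg m).hom with hM_def
      have hS : ∀ i (v : (C i).X deg), v ∈ S i ↔ v - x₀ i ∈ M i := by
        intro i v
        simp only [hs_def, hM_def, Set.mem_setOf_eq, LinearMap.mem_ker, map_sub]
        rw [show (C i).d deg m (x₀ i) = z.1.1 i from hx₀ i, sub_eq_zero]
      have hmap : ∀ ⦃i j : I⦄ (h : i ≤ j), ∀ x ∈ S j, (T h).f deg x ∈ S i := by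
        intro i j h x hx
        show (C i).d deg m ((T h).f deg x) = z.1.1 i
        have h0 := congrArg (fun (ψ : (C j).X deg ⟶ (C i).X m) => ψ x)
          ((T h).comm deg m)
        have h1 : (C i).d deg m ((T h).f deg x) = (T h).f m ((C j).d deg m x) :=
          h0
        rw [h1, show (C j).d deg m x = z.1.1 j from hx, z.1.2 i j h]
      have stab : ∀ (u : ℕ → I) (hu : Monotone u) (n : ℕ), ∃ K, ∃ hK : n ≤ K,
          ∀ l (hl : K ≤ l), ∀ (h1 : u n ≤ u l) (h2 : u n ≤ u K),
            (M (u l)).map ((T h1).f deg).hom = (M (u K)).map ((T h2).f deg).hom := by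
        rcases h2 with hart2 | hsurj2
        · exact Stmt12.stab_of_artinian_terms C T Tcomp deg
            (fun i => hart2 i deg) M
            (Stmt12.hmapM_of C T deg S x₀ hx₀ M hS hmap)
        · exact Stmt12.stab_of_homology C T Tcomp deg m
            (Stmt12.HC.next_prev m) (fun i => hart i deg) hsurj2
      obtain ⟨f, hf⟩ := Stmt12.master C T Trefl Tcomp deg S x₀ hx₀ M hS hmap stab
      rw [Stmt12.HC.Hπ_eq_zero_iff]
      refine ⟨f, ?_⟩
      apply Subtype.ext
      funext i
      exact hf i
    · -- the range is the set of compatible families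
      apply Set.Subset.antisymm
      · rintro _ ⟨h, rfl⟩ i j hij
        exact hproj i j hij h
      · rintro g hg
        choose zc hzc using fun i => Stmt12.HC.Hπ_surjective (C i) m (g i)
        set S : ∀ i : I, Set ((C i).X m) := fun i =>
          {v | ∃ hv : v ∈ Stmt12.HC.Cyc (C i) m,
            Stmt12.HC.Hπ (C i) m ⟨v, hv⟩ = g i} with hs_def
        set x₀ : ∀ i : I, (C i).X m := fun i => (zc i).1 with hx0_def
        have hx₀ : ∀ i, x₀ i ∈ S i := by
          intro i
          refine ⟨(zc i).2, ?_⟩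
          rw [show (⟨(zc i).1, (zc i).2⟩ : Stmt12.HC.Cyc (C i) m) = zc i from
            Subtype.ext rfl]
          exact hzc i
        set M : ∀ i : I, Submodule R ((C i).X m) :=
          fun i => Stmt12.HC.Bd (C i) m with hM_def
        have hS : ∀ i (v : (C i).X m), v ∈ S i ↔ v - x₀ i ∈ M i := by
          intro i v
          constructor
          · rintro ⟨hv, hcl⟩
            have hsubmem : v - x₀ i ∈ Stmt12.HC.Cyc (C i) m :=
              sub_mem hv (zc i).2
            have h0 : Stmt12.HC.Hπ (C i) m ⟨v - x₀ i, hsubmem⟩ = 0 := by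
              have e : (⟨v - x₀ i, hsubmem⟩ : Stmt12.HC.Cyc (C i) m)
                  = ⟨v, hv⟩ - zc i := Subtype.ext rfl
              rw [e, map_sub, hcl, hzc i, sub_self]
            rw [Stmt12.HC.Hπ_eq_zero_iff] at h0
            obtain ⟨w, hw⟩ := h0
            exact ⟨w, hw⟩
          · rintro ⟨w, hw⟩
            have hb : v - x₀ i ∈ Stmt12.HC.Cyc (C i) m :=
              Stmt12.HC.bd_le_cyc (C i) m ⟨w, hw⟩
            have hv : v ∈ Stmt12.HC.Cyc (C i) m := by
              have e : v = x₀ i + (v - x₀ i) := by abel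
              rw [e]
              exact add_mem (zc i).2 hb
            refine ⟨hv, ?_⟩
            have e2 : (⟨v, hv⟩ : Stmt12.HC.Cyc (C i) m)
                = zc i + ⟨v - x₀ i, hb⟩ :=
              Subtype.ext (by show v = x₀ i + (v - x₀ i); abel)
            rw [e2, map_add, hzc i]
            have h0 : Stmt12.HC.Hπ (C i) m ⟨v - x₀ i, hb⟩ = 0 :=
              (Stmt12.HC.Hπ_eq_zero_iff (C i) m _).mpr ⟨w, hw⟩
            rw [h0, add_zero]
        have hmap : ∀ ⦃i j : I⦄ (h : i ≤ j), ∀ x ∈ S j, (T h).f m x ∈ S i := by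
          rintro i j h x ⟨hv, hcl⟩
          refine ⟨Stmt12.HC.cyc_map (T h) ⟨x, hv⟩, ?_⟩
          have hnat := Stmt12.HC.Hπ_naturality (T h) (⟨x, hv⟩ :
            Stmt12.HC.Cyc (C j) m)
          rw [← hnat, hcl]
          exact hg i j h
        have stab : ∀ (u : ℕ → I) (hu : Monotone u) (n : ℕ), ∃ K, ∃ hK : n ≤ K,
            ∀ l (hl : K ≤ l), ∀ (h1 : u n ≤ u l) (h2 : u n ≤ u K),
              (M (u l)).map ((T h1).f m).hom = (M (u K)).map ((T h2).f m).hom := by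
          rcases h2 with hart2 | hsurj2
          · exact Stmt12.stab_of_artinian_terms C T Tcomp m
              (fun i => hart2 i m) M
              (Stmt12.hmapM_of C T m S x₀ hx₀ M hS hmap)
          · apply Stmt12.stab_of_const C T m M
            intro i j h
            apply le_antisymm
            · rintro _ ⟨_, ⟨x, rfl⟩, rfl⟩
              have h0 := congrArg
                (fun (ψ : (C j).X ((ComplexShape.down ℤ).prev m) ⟶ (C i).X m)
                  => ψ x) ((T h).comm ((ComplexShape.down ℤ).prev m) m)
              refine ⟨(T h).f ((ComplexShape.down ℤ).prev m) x, ?_⟩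
              exact h0
            · rintro _ ⟨x, rfl⟩
              obtain ⟨x', hx'⟩ := hsurj2 i j h ((ComplexShape.down ℤ).prev m) x
              have h0 := congrArg
                (fun (ψ : (C j).X ((ComplexShape.down ℤ).prev m) ⟶ (C i).X m)
                  => ψ x') ((T h).comm ((ComplexShape.down ℤ).prev m) m)
              refine ⟨(C j).d ((ComplexShape.down ℤ).prev m) m x',
                ⟨x', rfl⟩, ?_⟩
              calc (T h).f m ((C j).d ((ComplexShape.down ℤ).prev m) m x')
                  = (C i).d ((ComplexShape.down ℤ).prev m) m
                    ((T h).f ((ComplexShape.down ℤ).prev m) x') := h0.symm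
                _ = (C i).d ((ComplexShape.down ℤ).prev m) m x := by rw [hx']
        obtain ⟨f, hf⟩ := Stmt12.master C T Trefl Tcomp m S x₀ hx₀ M hS hmap stab
        have hfc : f ∈ Stmt12.HC.Cyc (limComplex C T) m := by
          show ((limComplex C T).sc m).g f = 0
          apply Subtype.ext
          funext i
          exact ((hf i).choose : (C i).d m ((ComplexShape.down ℤ).next m)
            (f.1 i) = 0)
        refine ⟨Stmt12.HC.Hπ (limComplex C T) m ⟨f, hfc⟩, ?_⟩
        funext i
        have hnat := Stmt12.HC.Hπ_naturality (limProj C T i)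
          (⟨f, hfc⟩ : Stmt12.HC.Cyc (limComplex C T) m)
        obtain ⟨hv, hcl⟩ := hf i
        show HomologicalComplex.homologyMap (limProj C T i) m
          (Stmt12.HC.Hπ (limComplex C T) m ⟨f, hfc⟩) = g i
        rw [hnat,
          show (⟨(limProj C T i).f m (⟨f, hfc⟩ : Stmt12.HC.Cyc (limComplex C T) m).1,
            Stmt12.HC.cyc_map (limProj C T i) ⟨f, hfc⟩⟩ : Stmt12.HC.Cyc (C i) m)
            = ⟨f.1 i, hv⟩ from Subtype.ext rfl]
        exact hcl
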